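/- Let N ≥ 2, M ≥ 1, τ ∈ ℝ, A := !![1, τ; 0, 1], β := ![τ²/2, τ] (2×1), B := ![τ, 1] (2×1), J := [0_{(N−M)×M}; I_M] ∈ Matrix (Fin N) (Fin M) ℝ, and let V, W, q, V⁺ satisfy ker V = span{1_N}, W of full column rank, qᵀW = 0, qᵀ1_N = 1, V⁺ := W(VW)⁻¹. Then for all x ∈ ℝ^{2N}, z ∈ ℝᴹ, φ ∈ ℝ^{N−1} and v ∈ ℝ^{2N}: (I₂⊗qᵀ)·((A⊗I_N)x + (β⊗J)z + (B⊗I_N)(V⁺φ) + v) = A·((I₂⊗qᵀ)x) + (β⊗(qᵀJ))z + (I₂⊗qᵀ)v. In particular (B⊗qᵀ)·V⁺ = 0, so the control input u = V⁺φ has no effect on the unobservable component η_ō = (I₂⊗qᵀ)x. -/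

import Mathlib

open Matrix Kronecker

/-- Equations (33) and (36) of the paper: under any control of the form `u = V⁺φ`, the
unobservable component `η_ō = (I₂ ⊗ qᵀ)x` evolves as the free-running weighted ensemble
mean, independently of the control; in particular `(B ⊗ qᵀ)V⁺ = 0`. -/
theorem stmt_17 (N M : ℕ) (hN : 2 ≤ N) (hM : 1 ≤ M) (τ : ℝ)
    (A : Matrix (Fin 2) (Fin 2) ℝ) (hA : A = !![1, τ; 0, 1])
    (β : Matrix (Fin 2) (Fin 1) ℝ) (hβ : β = !![τ^2/2; τ])
    (B : Matrix (Fin 2) (Fin 1) ℝ) (hB : B = !![τ; 1])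
    (J : Matrix (Fin N) (Fin M) ℝ)
    (hJ : J = Matrix.of (fun i j => if i.val = N - M + j.val then 1 else 0))
    (V : Matrix (Fin (N-1)) (Fin N) ℝ)
    (hV : LinearMap.ker V.mulVecLin = Submodule.span ℝ {(fun _ => 1 : Fin N → ℝ)})
    (W : Matrix (Fin N) (Fin (N-1)) ℝ)
    (hW : LinearIndependent ℝ (fun j : Fin (N-1) => fun i : Fin N => W i j))
    (q : Fin N → ℝ) (hqW : Matrix.vecMul q W = 0)
    (hq1 : q ⬝ᵥ (fun _ => 1) = 1)
    (Vplus : Matrix (Fin N) (Fin (N-1)) ℝ) (hVplus : Vplus = W * (V * W)⁻¹)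
    (qrow : Matrix (Fin 1) (Fin N) ℝ) (hqrow : qrow = Matrix.of (fun _ j => q j)) :
    (∀ (x : Fin 2 × Fin N → ℝ) (z : Fin M → ℝ) (φ : Fin (N-1) → ℝ)
        (v : Fin 2 × Fin N → ℝ),
      ((1 : Matrix (Fin 2) (Fin 2) ℝ) ⊗ₖ qrow) *ᵥ
        ((A ⊗ₖ (1 : Matrix (Fin N) (Fin N) ℝ)) *ᵥ x
          + ((β ⊗ₖ J).submatrix id (fun j : Fin M => ((0 : Fin 1), j))) *ᵥ z
          + ((B ⊗ₖ (1 : Matrix (Fin N) (Fin N) ℝ)).submatrix id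
              (fun i : Fin N => ((0 : Fin 1), i))) *ᵥ (Vplus *ᵥ φ)
          + v)
      = (A.submatrix Prod.fst Prod.fst) *ᵥ
          (((1 : Matrix (Fin 2) (Fin 2) ℝ) ⊗ₖ qrow) *ᵥ x)
        + ((β ⊗ₖ (qrow * J)).submatrix id (fun j : Fin M => ((0 : Fin 1), j))) *ᵥ z
        + ((1 : Matrix (Fin 2) (Fin 2) ℝ) ⊗ₖ qrow) *ᵥ v) ∧
    ((B ⊗ₖ qrow).submatrix id (fun i : Fin N => ((0 : Fin 1), i))) * Vplus = 0 := by
  have hqV : Matrix.vecMul q Vplus = 0 := by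
    rw [hVplus, ← Matrix.vecMul_vecMul, hqW, Matrix.zero_vecMul]
  have h2 : ((B ⊗ₖ qrow).submatrix id (fun i : Fin N => ((0 : Fin 1), i))) * Vplus = 0 := by
    ext ⟨i, s⟩ k
    have hk := congrFun hqV k
    simp [Matrix.vecMul, dotProduct] at hk
    simp [Matrix.mul_apply, hqrow, mul_assoc, ← Finset.mul_sum, hk]
  refine ⟨fun x z φ v => ?_, h2⟩
  have t1 : ((1 : Matrix (Fin 2) (Fin 2) ℝ) ⊗ₖ qrow) * (A ⊗ₖ (1 : Matrix (Fin N) (Fin N) ℝ))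
      = (A.submatrix Prod.fst Prod.fst : Matrix (Fin 2 × Fin 1) (Fin 2 × Fin 1) ℝ) * ((1 : Matrix (Fin 2) (Fin 2) ℝ) ⊗ₖ qrow) := by
    ext ⟨i, s⟩ ⟨a, b⟩
    simp [Matrix.mul_apply, Fintype.sum_prod_type, Matrix.one_apply, Finset.mul_sum, hqrow,
      mul_comm]
  have t2 : ((1 : Matrix (Fin 2) (Fin 2) ℝ) ⊗ₖ qrow) *
      ((β ⊗ₖ J).submatrix id (fun j : Fin M => ((0 : Fin 1), j)))
      = (β ⊗ₖ (qrow * J)).submatrix id (fun j : Fin M => ((0 : Fin 1), j)) := by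
    ext ⟨i, s⟩ j
    simp [Matrix.mul_apply, Fintype.sum_prod_type, Matrix.one_apply, Finset.mul_sum, hqrow,
      mul_comm, mul_left_comm, mul_assoc]
  have t3 : ((1 : Matrix (Fin 2) (Fin 2) ℝ) ⊗ₖ qrow) *
      ((B ⊗ₖ (1 : Matrix (Fin N) (Fin N) ℝ)).submatrix id (fun i : Fin N => ((0 : Fin 1), i)))
      = (B ⊗ₖ qrow).submatrix id (fun i : Fin N => ((0 : Fin 1), i)) := by
    ext ⟨i, s⟩ b
    simp [Matrix.mul_apply, Fintype.sum_prod_type, Matrix.one_apply, hqrow, mul_comm]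
  rw [Matrix.mulVec_add, Matrix.mulVec_add, Matrix.mulVec_add, Matrix.mulVec_mulVec,
    Matrix.mulVec_mulVec, Matrix.mulVec_mulVec, t1, t2, t3, Matrix.mulVec_mulVec, h2,
    Matrix.zero_mulVec, ← Matrix.mulVec_mulVec]
  simp
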